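/- Assume the curve convention: a > 0 and y : [−a,a] → ℝ² is C⁴ with θ⃗·y′(θ) = 0, θ⃗⊥·y′(θ) < 0, θ⃗·y″(θ) > 0 for all θ ∈ [−a,a], where θ⃗ = (cos θ, sin θ), θ⃗⊥ = (−sin θ, cos θ). Let x₀ ∈ ℝ² with x₀ ≠ y(0), (1,0)·(y(0) − x₀) = 0, and (0,1)·(y(0) − x₀) < 0. Define A₁(θ) := arcsin( (1,0)·(y(θ) − x₀) / |y(θ) − x₀| ). Then there exist a′ ∈ (0,a] and constants c₂ ≥ c₁ > 0 such that for all θ ∈ [−a′,a′] \ {0}: c₁ ≤ A₁(θ)/θ² ≤ c₂ and c₁ ≤ A₁′(θ)/θ ≤ c₂. -/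

import Mathlib

open Real Set Filter Topology

private lemma hasDerivAt_fst_comp {f : ℝ → ℝ × ℝ} {f' : ℝ × ℝ} {x : ℝ}
    (h : HasDerivAt f f' x) : HasDerivAt (fun t => (f t).1) f'.1 x := by
  exact (hasFDerivAt_fst (𝕜 := ℝ) (p := f x)).comp_hasDerivAt x h

private lemma hasDerivAt_snd_comp {f : ℝ → ℝ × ℝ} {f' : ℝ × ℝ} {x : ℝ}
    (h : HasDerivAt f f' x) : HasDerivAt (fun t => (f t).2) f'.2 x := by
  exact (hasFDerivAt_snd (𝕜 := ℝ) (p := f x)).comp_hasDerivAt x h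

/-- Derivative formula for `arcsin (u/√(u²+v²))` where `v < 0` locally. -/
private lemma key_hasDerivAt (u v U V : ℝ → ℝ) (ε : ℝ)
    (hu' : ∀ t, HasDerivAt u (U t) t)
    (hv' : ∀ t, HasDerivAt v (V t) t)
    (hball : ∀ t, |t| < ε → v t < 0) :
    ∀ θ, |θ| < ε →
      HasDerivAt (fun t => Real.arcsin (u t / Real.sqrt (u t ^ 2 + v t ^ 2)))
        (1 / Real.sqrt (1 - (u θ / Real.sqrt (u θ ^ 2 + v θ ^ 2)) ^ 2) *
          ((U θ * Real.sqrt (u θ ^ 2 + v θ ^ 2) -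
              u θ * ((2 * u θ * U θ + 2 * v θ * V θ) /
                  (2 * Real.sqrt (u θ ^ 2 + v θ ^ 2)))) /
            Real.sqrt (u θ ^ 2 + v θ ^ 2) ^ 2)) θ := by
  intro θ hθ
  have hvθ := hball θ hθ
  have hq : 0 < u θ ^ 2 + v θ ^ 2 := by nlinarith [sq_nonneg (u θ)]
  have hrθ : 0 < Real.sqrt (u θ ^ 2 + v θ ^ 2) := Real.sqrt_pos.mpr hq
  have hq' : HasDerivAt (fun t => u t ^ 2 + v t ^ 2)
      (2 * u θ * U θ + 2 * v θ * V θ) θ := by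
    refine (((hu' θ).pow 2).add ((hv' θ).pow 2)).congr_deriv ?_
    push_cast
    ring
  have hrd : HasDerivAt (fun t => Real.sqrt (u t ^ 2 + v t ^ 2))
      ((2 * u θ * U θ + 2 * v θ * V θ) / (2 * Real.sqrt (u θ ^ 2 + v θ ^ 2))) θ :=
    hq'.sqrt hq.ne'
  have hgd : HasDerivAt (fun t => u t / Real.sqrt (u t ^ 2 + v t ^ 2))
      ((U θ * Real.sqrt (u θ ^ 2 + v θ ^ 2) -
          u θ * ((2 * u θ * U θ + 2 * v θ * V θ) /
              (2 * Real.sqrt (u θ ^ 2 + v θ ^ 2)))) /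
        Real.sqrt (u θ ^ 2 + v θ ^ 2) ^ 2) θ :=
    (hu' θ).div hrd hrθ.ne'
  have habs : |u θ / Real.sqrt (u θ ^ 2 + v θ ^ 2)| < 1 := by
    rw [abs_div, abs_of_pos hrθ, div_lt_one hrθ]
    have h2 : u θ ^ 2 < u θ ^ 2 + v θ ^ 2 := by nlinarith
    calc |u θ| = Real.sqrt (u θ ^ 2) := (Real.sqrt_sq_eq_abs _).symm
      _ < _ := Real.sqrt_lt_sqrt (sq_nonneg _) h2
  have h1 : u θ / Real.sqrt (u θ ^ 2 + v θ ^ 2) ≠ -1 := (abs_lt.mp habs).1.ne'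
  have h2 : u θ / Real.sqrt (u θ ^ 2 + v θ ^ 2) ≠ 1 := (abs_lt.mp habs).2.ne
  have := (Real.hasDerivAt_arcsin h1 h2).comp θ hgd
  exact this

set_option maxHeartbeats 1000000 in
/-- Main analytic lemma: second-order vanishing of `arcsin(u/√(u²+v²))` at `0`. -/
private lemma key_main (u v U V : ℝ → ℝ) (L2 : ℝ)
    (hu' : ∀ t, HasDerivAt u (U t) t)
    (hv' : ∀ t, HasDerivAt v (V t) t)
    (hU' : HasDerivAt U L2 0)
    (hUc : Continuous U) (hVc : Continuous V)
    (hu0 : u 0 = 0) (hU0 : U 0 = 0) (hv0 : v 0 < 0) (hL2 : 0 < L2) :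
    ∃ δ > 0, ∃ c₁ c₂ : ℝ, 0 < c₁ ∧ c₁ ≤ c₂ ∧
      ∀ θ, |θ| < δ → θ ≠ 0 →
        (c₁ ≤ Real.arcsin (u θ / Real.sqrt (u θ ^ 2 + v θ ^ 2)) / θ ^ 2 ∧
          Real.arcsin (u θ / Real.sqrt (u θ ^ 2 + v θ ^ 2)) / θ ^ 2 ≤ c₂) ∧
        (c₁ ≤ deriv (fun t => Real.arcsin (u t / Real.sqrt (u t ^ 2 + v t ^ 2))) θ / θ ∧
          deriv (fun t => Real.arcsin (u t / Real.sqrt (u t ^ 2 + v t ^ 2))) θ / θ ≤ c₂) := by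
  have huc : Continuous u := Differentiable.continuous fun t => (hu' t).differentiableAt
  have hvc : Continuous v := Differentiable.continuous fun t => (hv' t).differentiableAt
  have hq0 : 0 < u 0 ^ 2 + v 0 ^ 2 := by nlinarith [sq_nonneg (u 0)]
  have hr0 : 0 < Real.sqrt (u 0 ^ 2 + v 0 ^ 2) := Real.sqrt_pos.mpr hq0
  set L : ℝ := L2 / Real.sqrt (u 0 ^ 2 + v 0 ^ 2) with hL_def
  have hLpos : 0 < L := div_pos hL2 hr0
  -- a ball where v < 0
  obtain ⟨ε, hε, hball⟩ : ∃ ε > 0, ∀ t, |t| < ε → v t < 0 := by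
    have h1 : ∀ᶠ t in 𝓝 (0 : ℝ), v t < 0 :=
      Filter.Tendsto.eventually_lt_const hv0 hvc.continuousAt
    obtain ⟨ε, hε, h2⟩ := Metric.eventually_nhds_iff.mp h1
    exact ⟨ε, hε, fun t ht => h2 (by simpa [Real.dist_eq] using ht)⟩
  -- derivative formula
  set D : ℝ → ℝ := fun t =>
    1 / Real.sqrt (1 - (u t / Real.sqrt (u t ^ 2 + v t ^ 2)) ^ 2) *
      ((U t * Real.sqrt (u t ^ 2 + v t ^ 2) -
          u t * ((2 * u t * U t + 2 * v t * V t) /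
              (2 * Real.sqrt (u t ^ 2 + v t ^ 2)))) /
        Real.sqrt (u t ^ 2 + v t ^ 2) ^ 2) with hD_def
  have hFD : ∀ θ, |θ| < ε →
      HasDerivAt (fun t => Real.arcsin (u t / Real.sqrt (u t ^ 2 + v t ^ 2))) (D θ) θ :=
    key_hasDerivAt u v U V ε hu' hv' hball
  -- slope limits
  have hsU : Tendsto (fun t => U t / t) (𝓝[≠] (0 : ℝ)) (𝓝 L2) := by
    have h := hasDerivAt_iff_tendsto_slope.mp hU'
    refine h.congr fun t => ?_
    simp [slope_def_field, hU0]
  have hsu : Tendsto (fun t => u t / t) (𝓝[≠] (0 : ℝ)) (𝓝 0) := by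
    have h := hasDerivAt_iff_tendsto_slope.mp (hU0 ▸ hu' 0)
    refine h.congr fun t => ?_
    simp [slope_def_field, hu0]
  -- continuity limits
  have hrc : Continuous fun t => Real.sqrt (u t ^ 2 + v t ^ 2) :=
    Real.continuous_sqrt.comp ((huc.pow 2).add (hvc.pow 2))
  have htr : Tendsto (fun t => Real.sqrt (u t ^ 2 + v t ^ 2)) (𝓝[≠] (0 : ℝ))
      (𝓝 (Real.sqrt (u 0 ^ 2 + v 0 ^ 2))) :=
    hrc.continuousAt.tendsto.mono_left nhdsWithin_le_nhds
  have htR : Tendsto (fun t => (2 * u t * U t + 2 * v t * V t) /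
      (2 * Real.sqrt (u t ^ 2 + v t ^ 2))) (𝓝[≠] (0 : ℝ))
      (𝓝 ((2 * u 0 * U 0 + 2 * v 0 * V 0) / (2 * Real.sqrt (u 0 ^ 2 + v 0 ^ 2)))) := by
    refine ContinuousAt.tendsto ?_ |>.mono_left nhdsWithin_le_nhds
    exact ContinuousAt.div
      (((continuous_const.mul huc).mul hUc).add ((continuous_const.mul hvc).mul hVc)).continuousAt
      (continuous_const.mul hrc).continuousAt (by positivity)
  have htA : Tendsto (fun t => 1 / Real.sqrt (1 - (u t / Real.sqrt (u t ^ 2 + v t ^ 2)) ^ 2))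
      (𝓝[≠] (0 : ℝ)) (𝓝 1) := by
    have hc : ContinuousAt (fun t => 1 / Real.sqrt (1 - (u t / Real.sqrt (u t ^ 2 + v t ^ 2)) ^ 2)) 0 := by
      have hinner : ContinuousAt (fun t => Real.sqrt (1 - (u t / Real.sqrt (u t ^ 2 + v t ^ 2)) ^ 2)) 0 :=
        Real.continuous_sqrt.continuousAt.comp
          (continuousAt_const.sub ((huc.continuousAt.div hrc.continuousAt hr0.ne').pow 2))
      refine ContinuousAt.div continuousAt_const hinner ?_
      simp [hu0]
    have h0 : 1 / Real.sqrt (1 - (u 0 / Real.sqrt (u 0 ^ 2 + v 0 ^ 2)) ^ 2) = 1 := by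
      simp [hu0]
    have h3 := hc.tendsto.mono_left (nhdsWithin_le_nhds (s := {(0:ℝ)}ᶜ))
    rwa [h0] at h3
  -- limit of D θ / θ
  have htD : Tendsto (fun θ => D θ / θ) (𝓝[≠] (0 : ℝ)) (𝓝 L) := by
    have h2 : Tendsto (fun θ =>
        (U θ / θ * Real.sqrt (u θ ^ 2 + v θ ^ 2) -
            u θ / θ * ((2 * u θ * U θ + 2 * v θ * V θ) /
                (2 * Real.sqrt (u θ ^ 2 + v θ ^ 2)))) /
          Real.sqrt (u θ ^ 2 + v θ ^ 2) ^ 2) (𝓝[≠] (0 : ℝ))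
        (𝓝 ((L2 * Real.sqrt (u 0 ^ 2 + v 0 ^ 2) -
            0 * ((2 * u 0 * U 0 + 2 * v 0 * V 0) / (2 * Real.sqrt (u 0 ^ 2 + v 0 ^ 2)))) /
          Real.sqrt (u 0 ^ 2 + v 0 ^ 2) ^ 2)) :=
      ((hsU.mul htr).sub (hsu.mul htR)).div (htr.pow 2) (by positivity)
    have hG := htA.mul h2
    have hval : 1 * ((L2 * Real.sqrt (u 0 ^ 2 + v 0 ^ 2) -
        0 * ((2 * u 0 * U 0 + 2 * v 0 * V 0) / (2 * Real.sqrt (u 0 ^ 2 + v 0 ^ 2)))) /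
          Real.sqrt (u 0 ^ 2 + v 0 ^ 2) ^ 2) = L := by
      rw [hL_def]
      field_simp
      ring
    rw [hval] at hG
    refine hG.congr fun θ => ?_
    rw [hD_def]
    ring
  -- extract δ bound
  have hev : ∀ᶠ θ in 𝓝[≠] (0 : ℝ), D θ / θ ∈ Ioo (L / 2) (2 * L) :=
    htD (Ioo_mem_nhds (by linarith) (by linarith))
  rw [eventually_nhdsWithin_iff] at hev
  obtain ⟨δ₀, hδ₀, hδball⟩ := Metric.eventually_nhds_iff.mp hev
  refine ⟨min ε δ₀, lt_min hε hδ₀, L / 4, 2 * L, by linarith, by linarith, ?_⟩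
  intro θ hθ hne
  have hθε : |θ| < ε := hθ.trans_le (min_le_left _ _)
  have hθδ : |θ| < δ₀ := hθ.trans_le (min_le_right _ _)
  have hDb : ∀ x : ℝ, |x| < δ₀ → x ≠ 0 → D x / x ∈ Ioo (L / 2) (2 * L) := by
    intro x hx hxne
    exact hδball (by simpa [Real.dist_eq] using hx) (by simpa using hxne)
  have hDθ := hDb θ hθδ hne
  constructor
  · -- value bounds via Cauchy MVT
    have hF0 : Real.arcsin (u 0 / Real.sqrt (u 0 ^ 2 + v 0 ^ 2)) = 0 := by simp [hu0]
    have hsq : ∀ x : ℝ, HasDerivAt (fun s : ℝ => s ^ 2) (2 * x) x := by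
      intro x
      simpa using hasDerivAt_pow 2 x
    rcases hne.lt_or_gt with hneg | hpos
    · -- θ < 0, interval [θ, 0]
      obtain ⟨c, hc, heq⟩ := exists_ratio_hasDerivAt_eq_ratio_slope
        (fun s : ℝ => s ^ 2) (fun x => 2 * x) hneg
        ((continuous_pow 2).continuousOn)
        (fun x _ => hsq x)
        (fun t => Real.arcsin (u t / Real.sqrt (u t ^ 2 + v t ^ 2))) D
        (fun x hx => by
          refine (hFD x ?_).continuousAt.continuousWithinAt
          rcases hx with ⟨h1, h2⟩
          rw [abs_lt] at hθε ⊢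
          constructor <;> nlinarith [hθε.1, hθε.2])
        (fun x hx => by
          refine hFD x ?_
          rcases hx with ⟨h1, h2⟩
          rw [abs_lt] at hθε ⊢
          constructor <;> nlinarith [hθε.1, hθε.2])
      have hcne : c ≠ 0 := ne_of_lt hc.2
      have hcδ : |c| < δ₀ := by
        rw [abs_lt] at hθδ ⊢
        constructor <;> nlinarith [hc.1, hc.2, hθδ.1, hθδ.2]
      have hDc := hDb c hcδ hcne
      rw [hF0] at heq
      -- heq : (F 0 - F θ) * (2 * c) = (0 ^ 2 - θ ^ 2) * D c  -- orientation check below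
      have hθ2 : (θ : ℝ) ^ 2 ≠ 0 := pow_ne_zero 2 hne
      have hkey : Real.arcsin (u θ / Real.sqrt (u θ ^ 2 + v θ ^ 2)) / θ ^ 2 = D c / c / 2 := by
        field_simp
        nlinarith [heq]
      rw [hkey]
      constructor <;> nlinarith [hDθ.1, hDθ.2, hDc.1, hDc.2, hLpos]
    · -- θ > 0, interval [0, θ]
      obtain ⟨c, hc, heq⟩ := exists_ratio_hasDerivAt_eq_ratio_slope
        (fun s : ℝ => s ^ 2) (fun x => 2 * x) hpos
        ((continuous_pow 2).continuousOn)
        (fun x _ => hsq x)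
        (fun t => Real.arcsin (u t / Real.sqrt (u t ^ 2 + v t ^ 2))) D
        (fun x hx => by
          refine (hFD x ?_).continuousAt.continuousWithinAt
          rcases hx with ⟨h1, h2⟩
          rw [abs_lt] at hθε ⊢
          constructor <;> nlinarith [hθε.1, hθε.2])
        (fun x hx => by
          refine hFD x ?_
          rcases hx with ⟨h1, h2⟩
          rw [abs_lt] at hθε ⊢
          constructor <;> nlinarith [hθε.1, hθε.2])
      have hcne : c ≠ 0 := ne_of_gt hc.1
      have hcδ : |c| < δ₀ := by
        rw [abs_lt] at hθδ ⊢
        constructor <;> nlinarith [hc.1, hc.2, hθδ.1, hθδ.2]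
      have hDc := hDb c hcδ hcne
      rw [hF0] at heq
      have hθ2 : (θ : ℝ) ^ 2 ≠ 0 := pow_ne_zero 2 hne
      have hkey : Real.arcsin (u θ / Real.sqrt (u θ ^ 2 + v θ ^ 2)) / θ ^ 2 = D c / c / 2 := by
        field_simp
        nlinarith [heq]
      rw [hkey]
      constructor <;> nlinarith [hDθ.1, hDθ.2, hDc.1, hDc.2, hLpos]
  · -- derivative bounds
    have hd : deriv (fun t => Real.arcsin (u t / Real.sqrt (u t ^ 2 + v t ^ 2))) θ = D θ :=
      (hFD θ hθε).deriv
    rw [hd]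
    exact ⟨by nlinarith [hDθ.1, hLpos], by nlinarith [hDθ.2]⟩

/-- The critical direction angle `A₁(θ) = arcsin(e₁·(y(θ)-x₀)/|y(θ)-x₀|)`. -/
noncomputable def critAngle (y : ℝ → ℝ × ℝ) (x₀ : ℝ × ℝ) (θ : ℝ) : ℝ :=
  Real.arcsin ((y θ - x₀).1 / Real.sqrt ((y θ - x₀).1 ^ 2 + (y θ - x₀).2 ^ 2))

/-- Tangent-point case: for `x₀` off the curve on the tangent line at `y(0)`, the
critical-direction angle `A₁` vanishes to second order: `A₁(θ) ≍ θ²` and `A₁'(θ) ≍ θ`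
near `θ = 0`. -/
theorem stmt10 (a : ℝ) (ha : 0 < a) (y : ℝ → ℝ × ℝ) (hy : ContDiff ℝ 4 y)
    (htang : ∀ θ ∈ Icc (-a) a,
      Real.cos θ * (deriv y θ).1 + Real.sin θ * (deriv y θ).2 = 0)
    (hperp : ∀ θ ∈ Icc (-a) a,
      -Real.sin θ * (deriv y θ).1 + Real.cos θ * (deriv y θ).2 < 0)
    (hcurv : ∀ θ ∈ Icc (-a) a,
      0 < Real.cos θ * (deriv (deriv y) θ).1 + Real.sin θ * (deriv (deriv y) θ).2)
    (x₀ : ℝ × ℝ) (hx₀ : x₀ ≠ y 0)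
    (hx1 : (y 0 - x₀).1 = 0) (hx2 : (y 0 - x₀).2 < 0) :
    ∃ a' ∈ Ioc 0 a, ∃ c₁ c₂ : ℝ, 0 < c₁ ∧ c₁ ≤ c₂ ∧
      ∀ θ ∈ Icc (-a') a', θ ≠ 0 →
        (c₁ ≤ critAngle y x₀ θ / θ ^ 2 ∧ critAngle y x₀ θ / θ ^ 2 ≤ c₂) ∧
        (c₁ ≤ deriv (critAngle y x₀) θ / θ ∧ deriv (critAngle y x₀) θ / θ ≤ c₂) := by
  have h0mem : (0 : ℝ) ∈ Icc (-a) a := ⟨by linarith, ha.le⟩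
  have hyd : Differentiable ℝ y := hy.differentiable (by norm_num)
  have hder : ContDiff ℝ 3 (deriv y) := by
    have h4 : ContDiff ℝ ((3 : ℕ) + 1) y := by exact_mod_cast hy
    exact (contDiff_succ_iff_deriv.mp h4).2.2
  have hdd : Differentiable ℝ (deriv y) := hder.differentiable (by norm_num)
  have hu' : ∀ t, HasDerivAt (fun s => (y s - x₀).1) ((deriv y t).1) t := fun t =>
    hasDerivAt_fst_comp (((hyd t).hasDerivAt).sub_const x₀)
  have hv' : ∀ t, HasDerivAt (fun s => (y s - x₀).2) ((deriv y t).2) t := fun t =>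
    hasDerivAt_snd_comp (((hyd t).hasDerivAt).sub_const x₀)
  have hU' : HasDerivAt (fun t => (deriv y t).1) ((deriv (deriv y) 0).1) 0 :=
    hasDerivAt_fst_comp ((hdd 0).hasDerivAt)
  have hUc : Continuous fun t => (deriv y t).1 := hder.continuous.fst
  have hVc : Continuous fun t => (deriv y t).2 := hder.continuous.snd
  have hU0 : (deriv y 0).1 = 0 := by simpa using htang 0 h0mem
  have hL2 : 0 < (deriv (deriv y) 0).1 := by simpa using hcurv 0 h0mem
  obtain ⟨δ, hδ, c₁, c₂, hc₁, hc₁₂, hP⟩ :=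
    key_main (fun s => (y s - x₀).1) (fun s => (y s - x₀).2)
      (fun t => (deriv y t).1) (fun t => (deriv y t).2) ((deriv (deriv y) 0).1)
      hu' hv' hU' hUc hVc hx1 hU0 hx2 hL2
  have hcrit : critAngle y x₀ =
      fun t => Real.arcsin ((y t - x₀).1 / Real.sqrt ((y t - x₀).1 ^ 2 + (y t - x₀).2 ^ 2)) :=
    rfl
  refine ⟨min a (δ / 2), ⟨lt_min ha (by linarith), min_le_left _ _⟩, c₁, c₂, hc₁, hc₁₂, ?_⟩
  intro θ hθ hne
  have hθδ : |θ| < δ := by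
    have h1 : |θ| ≤ min a (δ / 2) := abs_le.mpr ⟨hθ.1, hθ.2⟩
    have h2 : min a (δ / 2) ≤ δ / 2 := min_le_right _ _
    linarith
  have := hP θ hθδ hne
  rw [hcrit]
  exact this
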